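/- Let κ be an alternating P-kernel (i.e., κ̄_{xy}(t) = (-1)^{r_{xy}} κ_{xy}(t) for all x ≤ y), with right KLS-function f and left KLS-function g. Then ĝ = f^{-1} and f̂ = g^{-1}, where ĥ_{xy}(t) := (-1)^{r_{xy}} h_{xy}(t). -/

import Mathlib

set_option linter.unusedSectionVars false


open Polynomial

namespace KLS

noncomputable section

variable {P : Type*} [PartialOrder P] [LocallyFiniteOrder P] [DecidableEq P]

/-- Convolution product in the incidence algebra `I(P)`. -/
def conv (f g : P → P → Polynomial ℤ) : P → P → Polynomial ℤ :=
  fun x z => ∑ y ∈ Finset.Icc x z, f x y * g y z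

/-- The identity element `δ` of the incidence algebra. -/
def delta : P → P → Polynomial ℤ := fun x y => if x = y then 1 else 0

/-- Pointwise sum in the incidence algebra. -/
def add (f g : P → P → Polynomial ℤ) : P → P → Polynomial ℤ :=
  fun x y => f x y + g x y

/-- The bar involution `f̄_{xy}(t) = t^{r_{xy}} f_{xy}(t⁻¹)`. -/
def bar (r : P → P → ℕ) (f : P → P → Polynomial ℤ) : P → P → Polynomial ℤ :=
  fun x y => (f x y).reflect (r x y)

/-- The hat involution `ĥ_{xy}(t) = (-1)^{r_{xy}} h_{xy}(t)`. -/
def hat (r : P → P → ℕ) (f : P → P → Polynomial ℤ) : P → P → Polynomial ℤ :=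
  fun x y => (-1 : Polynomial ℤ) ^ (r x y) * f x y

/-- `r` is a weak rank function: positive on strict pairs and additive. -/
def IsWeakRank (r : P → P → ℕ) : Prop :=
  (∀ x y : P, x < y → 0 < r x y) ∧
    ∀ x y z : P, x ≤ y → y ≤ z → r x y + r y z = r x z

/-- Membership in the subring `𝒮(P)`: `deg f_{xy} ≤ r_{xy}`. -/
def InS (r : P → P → ℕ) (f : P → P → Polynomial ℤ) : Prop :=
  ∀ x y : P, x ≤ y → (f x y).natDegree ≤ r x y

/-- Membership in `𝒮_{1/2}(P)`: `f_{xx} = 1` and `deg f_{xy} < r_{xy}/2`. -/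
def InHalf (r : P → P → ℕ) (f : P → P → Polynomial ℤ) : Prop :=
  (∀ x : P, f x x = 1) ∧ ∀ x y : P, x < y → 2 * (f x y).natDegree < r x y

/-- An incidence function vanishes off the order relation. -/
def Supported (f : P → P → Polynomial ℤ) : Prop :=
  ∀ x y : P, ¬ x ≤ y → f x y = 0

/-- `κ` is a `P`-kernel: `κ ∈ 𝒮(P)`, `κ_{xx} = 1` and `κ⁻¹ = κ̄`. -/
def IsKernel (r : P → P → ℕ) (κ : P → P → Polynomial ℤ) : Prop :=
  InS r κ ∧ (∀ x : P, κ x x = 1) ∧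
    (∀ x z : P, x ≤ z → conv κ (bar r κ) x z = delta x z) ∧
    (∀ x z : P, x ≤ z → conv (bar r κ) κ x z = delta x z)

section Aux

variable {P : Type*} [PartialOrder P] [LocallyFiniteOrder P] [DecidableEq P]

lemma r_self {r : P → P → ℕ} (hr : IsWeakRank r) (x : P) : r x x = 0 := by
  have := hr.2 x x x le_rfl le_rfl; omega

lemma conv_assoc (a b c : P → P → Polynomial ℤ) (x z : P) :
    conv (conv a b) c x z = conv a (conv b c) x z := by
  classical
  unfold conv
  simp_rw [Finset.sum_mul, Finset.mul_sum]
  have L : ∀ w ∈ Finset.Icc x z,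
      (∑ y ∈ Finset.Icc x w, a x y * b y w * c w z)
        = ∑ y ∈ Finset.Icc x z, if y ≤ w then a x y * b y w * c w z else 0 := by
    intro w hw
    rw [Finset.mem_Icc] at hw
    rw [← Finset.sum_filter]
    apply Finset.sum_congr _ (fun _ _ => rfl)
    ext y
    simp only [Finset.mem_Icc, Finset.mem_filter]
    constructor
    · exact fun h => ⟨⟨h.1, h.2.trans hw.2⟩, h.2⟩
    · exact fun h => ⟨h.1.1, h.2⟩
  have R : ∀ y ∈ Finset.Icc x z,
      (∑ w ∈ Finset.Icc y z, a x y * (b y w * c w z))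
        = ∑ w ∈ Finset.Icc x z, if y ≤ w then a x y * b y w * c w z else 0 := by
    intro y hy
    rw [Finset.mem_Icc] at hy
    rw [← Finset.sum_filter]
    refine Finset.sum_congr ?_ (fun _ _ => by rw [mul_assoc])
    ext w
    simp only [Finset.mem_Icc, Finset.mem_filter]
    constructor
    · exact fun h => ⟨⟨hy.1.trans h.1, h.2⟩, h.1⟩
    · exact fun h => ⟨h.2, h.1.2⟩
  rw [Finset.sum_congr rfl L, Finset.sum_congr rfl R, Finset.sum_comm]

lemma delta_conv (a : P → P → Polynomial ℤ) {x z : P} (h : x ≤ z) :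
    conv delta a x z = a x z := by
  unfold conv delta
  rw [Finset.sum_eq_single_of_mem x (Finset.mem_Icc.mpr ⟨le_rfl, h⟩)]
  · simp
  · intro y _ hy
    simp [Ne.symm hy]

lemma conv_delta (a : P → P → Polynomial ℤ) {x z : P} (h : x ≤ z) :
    conv a delta x z = a x z := by
  unfold conv delta
  rw [Finset.sum_eq_single_of_mem z (Finset.mem_Icc.mpr ⟨h, le_rfl⟩)]
  · simp
  · intro y _ hy
    simp [hy]

lemma hat_hat (r : P → P → ℕ) (a : P → P → Polynomial ℤ) (x y : P) :
    hat r (hat r a) x y = a x y := by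
  unfold hat
  rw [← mul_assoc, ← mul_pow]
  norm_num

lemma hat_conv {r : P → P → ℕ} (hr : IsWeakRank r) (a b : P → P → Polynomial ℤ) (x z : P) :
    hat r (conv a b) x z = conv (hat r a) (hat r b) x z := by
  unfold hat conv
  rw [Finset.mul_sum]
  refine Finset.sum_congr rfl fun y hy => ?_
  rw [Finset.mem_Icc] at hy
  rw [← hr.2 x y z hy.1 hy.2, pow_add]
  ring

lemma hat_delta {r : P → P → ℕ} (hr : IsWeakRank r) (x z : P) :
    hat r delta x z = delta x z := by
  unfold hat delta
  by_cases h : x = z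
  · subst h; simp [r_self hr]
  · simp [h]

lemma deg_le_of_half {r : P → P → ℕ} {f : P → P → Polynomial ℤ} (hf : InHalf r f)
    {x y : P} (h : x ≤ y) : (f x y).natDegree ≤ r x y := by
  rcases eq_or_lt_of_le h with rfl | h
  · simp [hf.1 x]
  · have := hf.2 x y h; omega

lemma natDegree_hat_le (r : P → P → ℕ) (a : P → P → Polynomial ℤ) (x y : P) :
    (hat r a x y).natDegree ≤ (a x y).natDegree := by
  unfold hat
  refine (Polynomial.natDegree_mul_le).trans ?_
  have : ((-1 : Polynomial ℤ) ^ r x y).natDegree = 0 := by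
    rw [Polynomial.natDegree_pow, Polynomial.natDegree_neg, Polynomial.natDegree_one, mul_zero]
  omega

lemma reflect_sum (N : ℕ) {ι : Type*} (s : Finset ι) (p : ι → Polynomial ℤ) :
    Polynomial.reflect N (∑ i ∈ s, p i) = ∑ i ∈ s, Polynomial.reflect N (p i) := by
  classical
  induction s using Finset.induction with
  | empty => simp [Polynomial.reflect_zero]
  | insert _ _ h ih => rw [Finset.sum_insert h, Finset.sum_insert h, Polynomial.reflect_add, ih]

lemma palindrome_zero {p : Polynomial ℤ} {n : ℕ} (hdeg : 2 * p.natDegree < n)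
    (hp : p.reflect n = p) : p = 0 := by
  by_contra hne
  set d := p.natDegree with hd
  have hcoeff : p.coeff d ≠ 0 := fun h => hne (Polynomial.leadingCoeff_eq_zero.mp h)
  have h1 : (p.reflect n).coeff (n - d) = p.coeff d := by
    rw [Polynomial.coeff_reflect, Polynomial.revAt_le (by omega)]
    congr 1; omega
  rw [hp] at h1
  have h2 : p.coeff (n - d) = 0 := Polynomial.coeff_eq_zero_of_natDegree_lt (by omega)
  rw [h2] at h1
  exact hcoeff h1.symm

lemma cancel_left {a : P → P → Polynomial ℤ} (ha : ∀ x : P, a x x = 1)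
    (v : P → P → Polynomial ℤ) (hav : ∀ x z : P, x ≤ z → conv a v x z = 0) :
    ∀ x z : P, x ≤ z → v x z = 0 := by
  have key : ∀ n : ℕ, ∀ x z : P, x ≤ z → (Finset.Icc x z).card ≤ n → v x z = 0 := by
    intro n
    induction n with
    | zero =>
      intro x z hxz hcard
      exact absurd (Finset.card_pos.mpr ⟨x, Finset.mem_Icc.mpr ⟨le_rfl, hxz⟩⟩) (by omega)
    | succ n ih =>
      intro x z hxz hcard
      have h0 := hav x z hxz
      unfold conv at h0
      rw [Finset.sum_eq_single_of_mem x (Finset.mem_Icc.mpr ⟨le_rfl, hxz⟩)] at h0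
      · rwa [ha, one_mul] at h0
      · intro y hy hyx
        rw [Finset.mem_Icc] at hy
        have hxy : x < y := lt_of_le_of_ne hy.1 (Ne.symm hyx)
        have hsub : Finset.Icc y z ⊂ Finset.Icc x z := by
          constructor
          · exact Finset.Icc_subset_Icc_left hy.1
          · intro hcon
            have := hcon (Finset.mem_Icc.mpr ⟨le_rfl, hxz⟩)
            rw [Finset.mem_Icc] at this
            exact absurd this.1 (not_le_of_gt hxy)
        have := Finset.card_lt_card hsub
        rw [ih y z hy.2 (by omega), mul_zero]
  intro x z hxz
  exact key (Finset.Icc x z).card x z hxz le_rfl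

end Aux

/-- for an alternating `P`-kernel `κ`, we have `ĝ = f⁻¹` and `f̂ = g⁻¹`. -/
theorem stmt_13 {P : Type*} [PartialOrder P] [LocallyFiniteOrder P] [DecidableEq P]
    (r : P → P → ℕ) (hr : IsWeakRank r)
    (κ f g : P → P → Polynomial ℤ) (hκ : IsKernel r κ)
    (halt : ∀ x y : P, x ≤ y → bar r κ x y = hat r κ x y)
    (hfhalf : InHalf r f) (hfsupp : Supported f)
    (hf : ∀ x z : P, x ≤ z → bar r f x z = conv κ f x z)
    (hghalf : InHalf r g) (hgsupp : Supported g)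
    (hg : ∀ x z : P, x ≤ z → bar r g x z = conv g κ x z) :
    (∀ x z : P, x ≤ z → conv (hat r g) f x z = delta x z) ∧
    (∀ x z : P, x ≤ z → conv f (hat r g) x z = delta x z) ∧
    (∀ x z : P, x ≤ z → conv (hat r f) g x z = delta x z) ∧
    (∀ x z : P, x ≤ z → conv g (hat r f) x z = delta x z) := by
  have hgg : ∀ x : P, hat r g x x = 1 := fun x => by
    unfold hat; rw [r_self hr, pow_zero, one_mul, hghalf.1]
  -- bar of (hat r g) equals (hat r g) * (bar κ)
  have barhatg : ∀ x y : P, x ≤ y →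
      bar r (hat r g) x y = conv (hat r g) (bar r κ) x y := by
    intro x y hxy
    have hC : ((-1 : Polynomial ℤ) ^ r x y) = Polynomial.C ((-1 : ℤ) ^ r x y) := by
      rw [map_pow, map_neg, map_one]
    have step1 : bar r (hat r g) x y = (-1 : Polynomial ℤ) ^ r x y * conv g κ x y := by
      unfold bar hat
      rw [hC, Polynomial.reflect_C_mul, ← hC]
      have hb := hg x y hxy
      unfold bar at hb
      rw [hb]
    have step2 : (-1 : Polynomial ℤ) ^ r x y * conv g κ x y
        = conv (hat r g) (hat r κ) x y := by
      have := hat_conv hr g κ x y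
      unfold hat at this ⊢
      exact this
    rw [step1, step2]
    unfold conv
    refine Finset.sum_congr rfl fun w hw => ?_
    rw [Finset.mem_Icc] at hw
    rw [halt w y hw.2]
  -- the key identity: (hat r g) * f = delta
  have left : ∀ x z : P, x ≤ z → conv (hat r g) f x z = delta x z := by
    intro x z hxz
    rcases eq_or_lt_of_le hxz with rfl | hlt
    · unfold conv
      rw [Finset.Icc_self, Finset.sum_singleton, hgg, hfhalf.1, one_mul]
      simp [delta]
    · have hδ : delta x z = 0 := by unfold delta; simp [ne_of_lt hlt]
      rw [hδ]
      have hR : 0 < r x z := hr.1 x z hlt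
      -- degree bound
      have hdeg : 2 * (conv (hat r g) f x z).natDegree < r x z := by
        have hterm : ∀ y ∈ Finset.Icc x z,
            (hat r g x y * f y z).natDegree ≤ (r x z - 1) / 2 := by
          intro y hy
          rw [Finset.mem_Icc] at hy
          have radd := hr.2 x y z hy.1 hy.2
          have hd : 2 * ((g x y).natDegree + (f y z).natDegree) < r x z := by
            rcases eq_or_lt_of_le hy.1 with rfl | h1
            · rcases eq_or_lt_of_le hy.2 with rfl | h2
              · exact absurd hlt (lt_irrefl _)
              · have e1 : (g x x).natDegree = 0 := by rw [hghalf.1]; simp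
                have l2 := hfhalf.2 x z h2
                omega
            · rcases eq_or_lt_of_le hy.2 with rfl | h2
              · have e2 : (f y y).natDegree = 0 := by rw [hfhalf.1]; simp
                have l1 := hghalf.2 x y h1
                omega
              · have l1 := hghalf.2 x y h1
                have l2 := hfhalf.2 y z h2
                omega
          have hmul : (hat r g x y * f y z).natDegree
              ≤ (g x y).natDegree + (f y z).natDegree :=
            Polynomial.natDegree_mul_le.trans
              (Nat.add_le_add_right (natDegree_hat_le r g x y) _)
          rw [Nat.le_div_iff_mul_le (by norm_num)]
          omega
        have hsum : (∑ y ∈ Finset.Icc x z, hat r g x y * f y z).natDegree ≤ (r x z - 1) / 2 :=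
          Polynomial.natDegree_sum_le_of_forall_le
            (Finset.Icc x z) (fun y => hat r g x y * f y z) hterm
        have h2 : 2 * ((r x z - 1) / 2) ≤ r x z - 1 := by omega
        unfold conv
        omega
      -- palindromicity
      have hrefl : (conv (hat r g) f x z).reflect (r x z) = conv (hat r g) f x z := by
        have expand : (conv (hat r g) f x z).reflect (r x z)
            = ∑ y ∈ Finset.Icc x z, (conv (hat r g) (bar r κ) x y) * (conv κ f y z) := by
          unfold conv
          rw [reflect_sum]
          refine Finset.sum_congr rfl fun y hy => ?_
          rw [Finset.mem_Icc] at hy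
          have h1 : (hat r g x y * f y z).reflect (r x z)
              = (hat r g x y).reflect (r x y) * (f y z).reflect (r y z) := by
            rw [← hr.2 x y z hy.1 hy.2]
            exact Polynomial.reflect_mul _ _
              ((natDegree_hat_le r g x y).trans (deg_le_of_half hghalf hy.1))
              (deg_le_of_half hfhalf hy.2)
          have h2 := barhatg x y hy.1
          unfold bar at h2
          have h3 := hf y z hy.2
          unfold bar at h3
          rw [h1, h2, h3]
          rfl
        rw [expand]
        have assoc1 : (∑ y ∈ Finset.Icc x z, (conv (hat r g) (bar r κ) x y) * (conv κ f y z))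
            = conv (hat r g) (conv (bar r κ) (conv κ f)) x z :=
          conv_assoc (hat r g) (bar r κ) (conv κ f) x z
        rw [assoc1]
        unfold conv
        refine Finset.sum_congr rfl fun y hy => ?_
        rw [Finset.mem_Icc] at hy
        have inner : conv (bar r κ) (conv κ f) y z = f y z := by
          rw [← conv_assoc]
          have : conv (conv (bar r κ) κ) f y z
              = ∑ w ∈ Finset.Icc y z, delta y w * f w z := by
            unfold conv
            refine Finset.sum_congr rfl fun w hw => ?_
            rw [Finset.mem_Icc] at hw
            have := hκ.2.2.2 y w hw.1
            unfold conv at this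
            rw [this]
          rw [this]
          exact delta_conv f hy.2
        unfold conv at inner
        rw [inner]
      exact palindrome_zero hdeg hrefl
  -- right inverse: f * (hat r g) = delta
  have right : ∀ x z : P, x ≤ z → conv f (hat r g) x z = delta x z := by
    have hav : ∀ x z : P, x ≤ z →
        conv (hat r g) (fun y w => conv f (hat r g) y w - delta y w) x z = 0 := by
      intro x z hxz
      have split : conv (hat r g) (fun y w => conv f (hat r g) y w - delta y w) x z
          = conv (hat r g) (conv f (hat r g)) x z - conv (hat r g) delta x z := by
        unfold conv
        simp [mul_sub, Finset.sum_sub_distrib]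
      rw [split, conv_delta _ hxz]
      have a1 : conv (hat r g) (conv f (hat r g)) x z
          = conv (conv (hat r g) f) (hat r g) x z :=
        (conv_assoc (hat r g) f (hat r g) x z).symm
      rw [a1]
      have a2 : conv (conv (hat r g) f) (hat r g) x z
          = ∑ y ∈ Finset.Icc x z, delta x y * hat r g y z := by
        unfold conv
        refine Finset.sum_congr rfl fun y hy => ?_
        rw [Finset.mem_Icc] at hy
        have := left x y hy.1
        unfold conv at this
        rw [this]
      rw [a2]
      have := delta_conv (hat r g) hxz
      unfold conv at this
      rw [this, sub_self]
    intro x z hxz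
    have := cancel_left hgg _ hav x z hxz
    exact sub_eq_zero.mp this
  refine ⟨left, right, ?_, ?_⟩
  · intro x z hxz
    have c1 : conv (hat r f) g x z = conv (hat r f) (hat r (hat r g)) x z := by
      unfold conv
      refine Finset.sum_congr rfl fun y _ => ?_
      rw [hat_hat]
    rw [c1, ← hat_conv hr]
    show (-1 : Polynomial ℤ) ^ r x z * conv f (hat r g) x z = delta x z
    rw [right x z hxz]
    exact hat_delta hr x z
  · intro x z hxz
    have c1 : conv g (hat r f) x z = conv (hat r (hat r g)) (hat r f) x z := by
      unfold conv
      refine Finset.sum_congr rfl fun y _ => ?_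
      rw [hat_hat]
    rw [c1, ← hat_conv hr]
    show (-1 : Polynomial ℤ) ^ r x z * conv (hat r g) f x z = delta x z
    rw [left x z hxz]
    exact hat_delta hr x z
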